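/- Let b ≥ 1 and let ℓ_1,…,ℓ_b and r_1,…,r_b be positive integers. For i∈[b] and positive integers ℓ', r', define α_{L,i}(ℓ') = C(ℓ'−1+[i=1 and ℓ_1>1]+[i=b and r_b=1], ℓ_i−1+[i=b and r_b=1]) and α_{R,i}(r') = C(r'−1+[i=b and r_b>1]+[i=1 and ℓ_1=1], r_i−1+[i=1 and ℓ_1=1]), where [·] denotes the indicator (0 or 1) and C the binomial coefficient. If L_1,…,L_b,R_1,…,R_b are independent random variables, each with P(=ℓ)=2^{−ℓ} for every integer ℓ≥1, then E[ ∏_{i=1}^b α_{L,i}(L_i)·α_{R,i}(R_i) ] = 4. In particular, this expectation does not depend on b or on the integers ℓ_1,…,ℓ_b, r_1,…,r_b. -/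

import Mathlib

open MeasureTheory ProbabilityTheory
open scoped ENNReal

lemma hasSum_choose_half (a k : ℕ) (hak : a ≤ k) :
    HasSum (fun n : ℕ => (((n + a).choose k : ℝ)) * (1/2) ^ (n+1)) ((2:ℝ) ^ a) := by
  have h := hasSum_choose_mul_geometric_of_norm_lt_one (𝕜 := ℝ) k (r := 1/2)
    (by rw [Real.norm_eq_abs]; rw [abs_of_nonneg (by norm_num)]; norm_num)
  have h2 := h.mul_right ((1/2:ℝ) ^ (k - a + 1))
  rw [← hasSum_nat_add_iff' (k - a)]
  have hz : ∑ i ∈ Finset.range (k - a),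
      (((i + a).choose k : ℝ)) * (1/2) ^ (i+1) = 0 := by
    refine Finset.sum_eq_zero fun i hi => ?_
    rw [Finset.mem_range] at hi
    rw [Nat.choose_eq_zero_of_lt (by omega)]
    simp
  rw [hz, sub_zero]
  have hfun : (fun n => ((n + k).choose k : ℝ) * (1/2) ^ n * (1/2) ^ (k - a + 1)) =
      (fun n => (((n + (k - a) + a).choose k : ℝ)) * (1/2) ^ ((n + (k - a))+1)) := by
    funext n
    rw [show n + (k - a) + a = n + k by omega,
      show n + (k - a) + 1 = n + (k - a + 1) by omega, mul_assoc, ← pow_add]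
  have hv : (1:ℝ) / (1 - 1/2) ^ (k + 1) * (1/2) ^ (k - a + 1) = 2 ^ a := by
    rw [show (1:ℝ) - 1/2 = 1/2 by norm_num]
    rw [div_pow, one_pow, one_div_one_div, div_pow, one_pow]
    rw [mul_one_div, div_eq_iff (by positivity), ← pow_add]
    congr 1
    omega
  rw [← hv]
  rw [hfun] at h2
  exact h2

lemma lintegral_comp_nat {Ω : Type*} [MeasurableSpace Ω] (μ : Measure Ω)
    (X : Ω → ℕ) (hX : Measurable X) (g : ℕ → ℝ≥0∞) :
    ∫⁻ ω, g (X ω) ∂μ = ∑' n, g n * μ {ω | X ω = n} := by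
  rw [← lintegral_map (measurable_from_nat (f := g)) hX, lintegral_countable']
  refine tsum_congr fun n => ?_
  rw [Measure.map_apply hX (measurableSet_singleton n)]
  rfl

lemma measure_eq_zero_of_geom {Ω : Type*} [MeasurableSpace Ω] (μ : Measure Ω)
    [IsProbabilityMeasure μ] (X : Ω → ℕ) (hX : Measurable X)
    (hdist : ∀ x : ℕ, 1 ≤ x → μ {ω | X ω = x} = ENNReal.ofReal ((1 / 2 : ℝ) ^ x)) :
    μ {ω | X ω = 0} = 0 := by
  have hU : (⋃ n : ℕ, {ω | X ω = n}) = Set.univ := by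
    ext ω; simp
  have hdisj : Pairwise (Function.onFun Disjoint fun n => {ω | X ω = n}) := by
    intro m n hmn
    simp only [Function.onFun]
    rw [Set.disjoint_left]
    intro ω h1 h2
    exact hmn (h1.symm.trans h2)
  have h1 : ∑' n : ℕ, μ {ω | X ω = n} = 1 := by
    rw [← measure_iUnion hdisj (fun n => hX (measurableSet_singleton n)), hU, measure_univ]
  rw [tsum_eq_zero_add' ENNReal.summable] at h1
  have hs : HasSum (fun n : ℕ => (1/2:ℝ)^(n+1)) 1 := by
    have h := (hasSum_geometric_of_lt_one (by norm_num : (0:ℝ) ≤ 1/2)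
      (by norm_num)).mul_left (1/2:ℝ)
    have e : (fun n : ℕ => (1/2:ℝ)^(n+1)) = fun i => 1/2 * (1/2:ℝ)^i := by
      funext n; rw [pow_succ']
    have hv : (1/2:ℝ) * (1 - 1/2)⁻¹ = 1 := by norm_num
    rw [hv] at h
    rw [e]
    exact h
  have h2 : ∑' n : ℕ, μ {ω | X ω = n + 1} = 1 := by
    calc ∑' n : ℕ, μ {ω | X ω = n + 1}
        = ∑' n : ℕ, ENNReal.ofReal ((1/2:ℝ)^(n+1)) :=
          tsum_congr fun n => hdist (n+1) (by omega)
      _ = ENNReal.ofReal (∑' n : ℕ, (1/2:ℝ)^(n+1)) :=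
          (ENNReal.ofReal_tsum_of_nonneg (fun n => by positivity) hs.summable).symm
      _ = 1 := by rw [hs.tsum_eq]; simp
  rw [h2] at h1
  have := ENNReal.sub_eq_of_eq_add (by simp : (1:ℝ≥0∞) ≠ ∞) h1.symm
  simpa using this.symm

lemma lintegral_choose_geom {Ω : Type*} [MeasurableSpace Ω] (μ : Measure Ω)
    [IsProbabilityMeasure μ] (X : Ω → ℕ) (hX : Measurable X)
    (hdist : ∀ x : ℕ, 1 ≤ x → μ {ω | X ω = x} = ENNReal.ofReal ((1 / 2 : ℝ) ^ x))
    (a k : ℕ) (hak : a ≤ k) :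
    ∫⁻ ω, ((X ω - 1 + a).choose k : ℝ≥0∞) ∂μ = 2 ^ a := by
  rw [lintegral_comp_nat μ X hX (fun n => ((n - 1 + a).choose k : ℝ≥0∞))]
  rw [tsum_eq_zero_add' ENNReal.summable]
  rw [measure_eq_zero_of_geom μ X hX hdist, mul_zero, zero_add]
  have hterm : ∀ n : ℕ, ((n + 1 - 1 + a).choose k : ℝ≥0∞) * μ {ω | X ω = n + 1} =
      ENNReal.ofReal ((((n + a).choose k : ℝ)) * (1/2) ^ (n+1)) := by
    intro n
    rw [hdist (n+1) (by omega), ENNReal.ofReal_mul (by positivity),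
      ENNReal.ofReal_natCast]
    norm_num
  rw [tsum_congr hterm,
    ← ENNReal.ofReal_tsum_of_nonneg (fun n => by positivity)
      (hasSum_choose_half a k hak).summable,
    (hasSum_choose_half a k hak).tsum_eq]
  rw [ENNReal.ofReal_pow (by norm_num)]
  norm_num

lemma lintegral_prod_of_iIndepFun {Ω ι : Type*} [MeasurableSpace Ω] (μ : Measure Ω)
    [IsProbabilityMeasure μ] (X : ι → Ω → ℝ≥0∞) (hm : ∀ i, Measurable (X i))
    (h : iIndepFun X μ) (s : Finset ι) :
    ∫⁻ ω, ∏ i ∈ s, X i ω ∂μ = ∏ i ∈ s, ∫⁻ ω, X i ω ∂μ := by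
  classical
  induction s using Finset.induction_on with
  | empty => simp
  | @insert a s ha ih =>
    simp only [Finset.prod_insert ha]
    have hks : IndepFun (fun ω => ∏ j ∈ s, X j ω) (X a) μ := by
      have h0 := h.indepFun_finsetProd_of_notMem hm ha
      have : (∏ j ∈ s, X j) = fun ω => ∏ j ∈ s, X j ω :=
        funext fun ω => Finset.prod_apply ω s X
      rwa [this] at h0
    have hkey := lintegral_mul_eq_lintegral_mul_lintegral_of_indepFun (μ := μ)
      (s.measurable_prod (fun i _ => hm i)) (hm a) hks
    calc ∫⁻ ω, X a ω * ∏ i ∈ s, X i ω ∂μ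
        = ∫⁻ ω, ((fun ω => ∏ j ∈ s, X j ω) * X a) ω ∂μ := by
          refine lintegral_congr fun ω => ?_
          simp [mul_comm]
      _ = (∫⁻ ω, ∏ j ∈ s, X j ω ∂μ) * ∫⁻ ω, X a ω ∂μ := hkey
      _ = (∫⁻ ω, X a ω ∂μ) * ∏ i ∈ s, ∫⁻ ω, X i ω ∂μ := by
          rw [mul_comm, ih]

lemma sum_ite_eq_fin {b : ℕ} (c : ℕ) (hc : c < b) (P : Fin b → Prop) [DecidablePred P] :
    (∑ i : Fin b, if (i : ℕ) = c ∧ P i then 1 else 0) =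
      if P ⟨c, hc⟩ then 1 else 0 := by
  rw [Finset.sum_eq_single (⟨c, hc⟩ : Fin b)]
  · simp
  · intro i _ hne
    have : (i : ℕ) ≠ c := fun h => hne (Fin.ext h)
    simp [this]
  · intro h
    exact absurd (Finset.mem_univ _) h

/-- `α_{L,i}(ℓ') = C(ℓ'−1+[i=1 ∧ ℓ_1>1]+[i=b ∧ r_b=1], ℓ_i−1+[i=b ∧ r_b=1])`, where the
blocks are indexed by `i : Fin b` (so `i = 1` in the paper corresponds to `(i : ℕ) = 0`
and `i = b` to `(i : ℕ) = b − 1`). -/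
def alphaL {b : ℕ} (ℓ r : Fin b → ℕ) (i : Fin b) (x : ℕ) : ℕ :=
  Nat.choose
    (x - 1 + (if (i : ℕ) = 0 ∧ 1 < ℓ i then 1 else 0) +
      (if (i : ℕ) = b - 1 ∧ r i = 1 then 1 else 0))
    (ℓ i - 1 + (if (i : ℕ) = b - 1 ∧ r i = 1 then 1 else 0))

/-- `α_{R,i}(r') = C(r'−1+[i=b ∧ r_b>1]+[i=1 ∧ ℓ_1=1], r_i−1+[i=1 ∧ ℓ_1=1])`. -/
def alphaR {b : ℕ} (ℓ r : Fin b → ℕ) (i : Fin b) (x : ℕ) : ℕ :=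
  Nat.choose
    (x - 1 + (if (i : ℕ) = b - 1 ∧ 1 < r i then 1 else 0) +
      (if (i : ℕ) = 0 ∧ ℓ i = 1 then 1 else 0))
    (r i - 1 + (if (i : ℕ) = 0 ∧ ℓ i = 1 then 1 else 0))

/-- If `L_1,…,L_b, R_1,…,R_b` are independent random variables, each with the geometric
distribution `P(· = x) = 2^{−x}` for `x ≥ 1`, then
`E[ ∏_{i=1}^b α_{L,i}(L_i) α_{R,i}(R_i) ] = 4`; in particular this expectation does not
depend on `b` nor on the integers `ℓ_1,…,ℓ_b, r_1,…,r_b`. -/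
theorem expectation_product_alpha_geometric {Ω : Type*} [MeasurableSpace Ω]
    (μ : Measure Ω) [IsProbabilityMeasure μ]
    (b : ℕ) (hb : 1 ≤ b) (ℓ r : Fin b → ℕ) (hℓ : ∀ i, 1 ≤ ℓ i) (hr : ∀ i, 1 ≤ r i)
    (L R : Fin b → Ω → ℕ)
    (hLmeas : ∀ i, Measurable (L i)) (hRmeas : ∀ i, Measurable (R i))
    (hindep : iIndepFun
      (fun j : Fin b ⊕ Fin b => Sum.elim L R j) μ)
    (hLdist : ∀ i, ∀ x : ℕ, 1 ≤ x → μ {ω | L i ω = x} = ENNReal.ofReal ((1 / 2 : ℝ) ^ x))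
    (hRdist : ∀ i, ∀ x : ℕ, 1 ≤ x → μ {ω | R i ω = x} = ENNReal.ofReal ((1 / 2 : ℝ) ^ x)) :
    (∫ ω, ∏ i : Fin b, ((alphaL ℓ r i (L i ω) : ℝ) * (alphaR ℓ r i (R i ω) : ℝ)) ∂μ) = 4 := by
  classical
  -- the exponents
  set aL : Fin b → ℕ := fun i =>
    (if (i : ℕ) = 0 ∧ 1 < ℓ i then 1 else 0) +
      (if (i : ℕ) = b - 1 ∧ r i = 1 then 1 else 0) with haL
  set aR : Fin b → ℕ := fun i =>
    (if (i : ℕ) = b - 1 ∧ 1 < r i then 1 else 0) +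
      (if (i : ℕ) = 0 ∧ ℓ i = 1 then 1 else 0) with haR
  -- the ℝ≥0∞-valued factors, indexed by a sum type
  set F : Fin b ⊕ Fin b → Ω → ℝ≥0∞ := fun j =>
    Sum.elim (fun i ω => ((alphaL ℓ r i (L i ω) : ℝ≥0∞)))
      (fun i ω => ((alphaR ℓ r i (R i ω) : ℝ≥0∞))) j with hF
  have hFmeas : ∀ j, Measurable (F j) := by
    rintro (i | i)
    · exact (measurable_from_nat (f := fun x : ℕ => ((alphaL ℓ r i x : ℝ≥0∞)))).comp (hLmeas i)
    · exact (measurable_from_nat (f := fun x : ℕ => ((alphaR ℓ r i x : ℝ≥0∞)))).comp (hRmeas i)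
  have hFindep : iIndepFun F μ := by
    have := hindep.comp
      (fun j => Sum.elim (fun i x => ((alphaL ℓ r i x : ℝ≥0∞)))
        (fun i x => ((alphaR ℓ r i x : ℝ≥0∞))) j)
      (fun j => measurable_from_nat)
    convert this using 1
    funext j
    cases j <;> rfl
  -- measurability and nonnegativity of the integrand
  have hmeasInt : Measurable fun ω =>
      ∏ i : Fin b, ((alphaL ℓ r i (L i ω) : ℝ) * (alphaR ℓ r i (R i ω) : ℝ)) := by
    refine Finset.measurable_prod _ fun i _ => Measurable.mul ?_ ?_
    · exact (measurable_from_nat (f := fun x : ℕ => ((alphaL ℓ r i x : ℝ)))).comp (hLmeas i)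
    · exact (measurable_from_nat (f := fun x : ℕ => ((alphaR ℓ r i x : ℝ)))).comp (hRmeas i)
  have hnn : 0 ≤ᵐ[μ] fun ω =>
      ∏ i : Fin b, ((alphaL ℓ r i (L i ω) : ℝ) * (alphaR ℓ r i (R i ω) : ℝ)) :=
    Filter.Eventually.of_forall fun ω => Finset.prod_nonneg fun i _ =>
      mul_nonneg (Nat.cast_nonneg _) (Nat.cast_nonneg _)
  rw [integral_eq_lintegral_of_nonneg_ae hnn hmeasInt.aestronglyMeasurable]
  have hof : ∀ ω, ENNReal.ofReal
      (∏ i : Fin b, ((alphaL ℓ r i (L i ω) : ℝ) * (alphaR ℓ r i (R i ω) : ℝ))) =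
      ∏ j : Fin b ⊕ Fin b, F j ω := by
    intro ω
    rw [Fintype.prod_sum_type]
    rw [show (∏ i : Fin b, ((alphaL ℓ r i (L i ω) : ℝ) * (alphaR ℓ r i (R i ω) : ℝ)))
        = ((∏ i : Fin b, alphaL ℓ r i (L i ω) * alphaR ℓ r i (R i ω) : ℕ) : ℝ) by
      push_cast; rfl]
    rw [ENNReal.ofReal_natCast]
    push_cast
    rw [← Finset.prod_mul_distrib]
    rfl
  simp_rw [hof]
  rw [lintegral_prod_of_iIndepFun μ F hFmeas hFindep Finset.univ]
  rw [Fintype.prod_sum_type]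
  have hLint : ∀ i : Fin b, ∫⁻ ω, F (Sum.inl i) ω ∂μ = 2 ^ aL i := by
    intro i
    have hrw : ∀ x : ℕ, (alphaL ℓ r i x : ℝ≥0∞) =
        (((x - 1 + aL i).choose
          (ℓ i - 1 + (if (i : ℕ) = b - 1 ∧ r i = 1 then 1 else 0)) : ℕ) : ℝ≥0∞) := by
      intro x
      rw [haL]
      simp only [alphaL, add_assoc]
    have hle : aL i ≤ ℓ i - 1 + (if (i : ℕ) = b - 1 ∧ r i = 1 then 1 else 0) := by
      have hL1 : (if (i : ℕ) = 0 ∧ 1 < ℓ i then 1 else 0) ≤ ℓ i - 1 := by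
        split_ifs with h
        · have := h.2; omega
        · omega
      exact add_le_add hL1 le_rfl
    calc ∫⁻ ω, F (Sum.inl i) ω ∂μ
        = ∫⁻ ω, (((L i ω - 1 + aL i).choose
            (ℓ i - 1 + (if (i : ℕ) = b - 1 ∧ r i = 1 then 1 else 0)) : ℕ) : ℝ≥0∞) ∂μ := by
          refine lintegral_congr fun ω => ?_
          exact hrw (L i ω)
      _ = 2 ^ aL i := lintegral_choose_geom μ (L i) (hLmeas i) (hLdist i) _ _ hle
  have hRint : ∀ i : Fin b, ∫⁻ ω, F (Sum.inr i) ω ∂μ = 2 ^ aR i := by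
    intro i
    have hrw : ∀ x : ℕ, (alphaR ℓ r i x : ℝ≥0∞) =
        (((x - 1 + aR i).choose
          (r i - 1 + (if (i : ℕ) = 0 ∧ ℓ i = 1 then 1 else 0)) : ℕ) : ℝ≥0∞) := by
      intro x
      rw [haR]
      simp only [alphaR, add_assoc]
    have hle : aR i ≤ r i - 1 + (if (i : ℕ) = 0 ∧ ℓ i = 1 then 1 else 0) := by
      have hR1 : (if (i : ℕ) = b - 1 ∧ 1 < r i then 1 else 0) ≤ r i - 1 := by
        split_ifs with h
        · have := h.2; omega
        · omega
      exact add_le_add hR1 le_rfl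
    calc ∫⁻ ω, F (Sum.inr i) ω ∂μ
        = ∫⁻ ω, (((R i ω - 1 + aR i).choose
            (r i - 1 + (if (i : ℕ) = 0 ∧ ℓ i = 1 then 1 else 0)) : ℕ) : ℝ≥0∞) ∂μ := by
          refine lintegral_congr fun ω => ?_
          exact hrw (R i ω)
      _ = 2 ^ aR i := lintegral_choose_geom μ (R i) (hRmeas i) (hRdist i) _ _ hle
  rw [Finset.prod_congr rfl (fun i _ => hLint i), Finset.prod_congr rfl (fun i _ => hRint i)]
  rw [Finset.prod_pow_eq_pow_sum, Finset.prod_pow_eq_pow_sum, ← pow_add]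
  have hsum : (∑ i : Fin b, aL i) + (∑ i : Fin b, aR i) = 2 := by
    have h0b : (0 : ℕ) < b := hb
    have hbb : b - 1 < b := by omega
    simp only [haL, haR]
    rw [Finset.sum_add_distrib, Finset.sum_add_distrib]
    rw [sum_ite_eq_fin 0 h0b (fun i => 1 < ℓ i),
      sum_ite_eq_fin (b-1) hbb (fun i => r i = 1),
      sum_ite_eq_fin (b-1) hbb (fun i => 1 < r i),
      sum_ite_eq_fin 0 h0b (fun i => ℓ i = 1)]
    have h1 := hℓ ⟨0, h0b⟩
    have h2 := hr ⟨b-1, hbb⟩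
    split_ifs <;> omega
  rw [hsum]
  norm_num
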